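/- Let K ⊂ ℝⁿ be a closed convex set containing the origin in its interior. Then for every x ∈ ℝⁿ, sup_{y ∈ K̂} ⟨x,y⟩ = sup_{y ∈ K̂ ∩ exp(K*)} ⟨x,y⟩, where exp(K*) denotes the set of exposed points of K*. -/

import Mathlib

open RealInnerProductSpace

variable {n : ℕ}

/-- The polar of a set `K`. -/
def polar (K : Set (EuclideanSpace ℝ (Fin n))) : Set (EuclideanSpace ℝ (Fin n)) :=
  {y | ∀ x ∈ K, ⟪x, y⟫ ≤ 1}

/-- The set `K̂` of points of the polar attaining value 1 on `K`. -/
def hatK (K : Set (EuclideanSpace ℝ (Fin n))) : Set (EuclideanSpace ℝ (Fin n)) :=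
  {y ∈ polar K | ∃ x ∈ K, ⟪x, y⟫ = 1}

/-- A function is sublinear if it is convex and positively homogeneous. -/
def IsSublinear (σ : EuclideanSpace ℝ (Fin n) → ℝ) : Prop :=
  ConvexOn ℝ Set.univ σ ∧ ∀ t : ℝ, 0 < t → ∀ x, σ (t • x) = t * σ x

/-- The recession cone of `K`. -/
def recCone (K : Set (EuclideanSpace ℝ (Fin n))) : Set (EuclideanSpace ℝ (Fin n)) :=
  {x ∈ K | ∀ t : ℝ, 0 < t → t • x ∈ K}

/-- The support function of a set `T`, as `x ↦ sup_{y ∈ T} ⟪x, y⟫`. -/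
noncomputable def suppFn (T : Set (EuclideanSpace ℝ (Fin n)))
    (x : EuclideanSpace ℝ (Fin n)) : ℝ :=
  sSup ((fun y => ⟪x, y⟫) '' T)

section Aux

local notation "E" => EuclideanSpace ℝ (Fin n)

/-- Padding: a sum over `Fin m` of a function vanishing off the first `k` indices. -/
lemma aux_pad_sum {M : Type*} [AddCommMonoid M] {m k : ℕ} (hk : k ≤ m) (f : Fin m → M)
    (hzero : ∀ i : Fin m, ¬((i : ℕ) < k) → f i = 0) :
    ∑ i, f i = ∑ j : Fin k, f (Fin.castLE hk j) := by
  calc ∑ i : Fin m, f i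
      = ∑ i ∈ Finset.univ.map (Fin.castLEEmb hk), f i := by
        refine (Finset.sum_subset (Finset.subset_univ _) ?_).symm
        intro i _ hi
        refine hzero i fun hik => hi ?_
        simp only [Finset.mem_map, Finset.mem_univ, true_and]
        exact ⟨⟨(i : ℕ), hik⟩, by ext; simp⟩
    _ = ∑ j : Fin k, f (Fin.castLE hk j) := Finset.sum_map _ _ _

/-- The convex hull of a compact set in Euclidean space is compact. -/
lemma aux_isCompact_convexHull {S : Set (EuclideanSpace ℝ (Fin n))} (hS : IsCompact S) :
    IsCompact (convexHull ℝ S) := by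
  rcases S.eq_empty_or_nonempty with rfl | ⟨z₀, hz₀⟩
  · simp
  · set g : (Fin (n + 1) → ℝ) × (Fin (n + 1) → E) → E :=
      fun p => ∑ i, p.1 i • p.2 i with hg
    have hgc : Continuous g := by
      apply continuous_finset_sum
      intro i _
      exact ((continuous_apply i).comp continuous_fst).smul
        ((continuous_apply i).comp continuous_snd)
    have hT : IsCompact ((stdSimplex ℝ (Fin (n + 1))) ×ˢ (Set.univ.pi fun _ : Fin (n+1) => S)) :=
      (isCompact_stdSimplex ℝ _).prod (isCompact_univ_pi fun _ => hS)
    have himg : convexHull ℝ S =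
        g '' ((stdSimplex ℝ (Fin (n + 1))) ×ˢ (Set.univ.pi fun _ : Fin (n+1) => S)) := by
      apply Set.Subset.antisymm
      · intro x hx
        rw [convexHull_eq_union] at hx
        simp only [Set.mem_iUnion] at hx
        obtain ⟨t, hts, hai, hxt⟩ := hx
        have hcard : t.card ≤ n + 1 := by
          have h1 := hai.card_le_finrank_succ
          have h2 : Module.finrank ℝ (vectorSpan ℝ (Set.range ((↑) : t → E))) ≤
              Module.finrank ℝ E := Submodule.finrank_le _
          have h3 : Module.finrank ℝ E = n := finrank_euclideanSpace_fin
          simp only [Fintype.card_coe] at h1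
          omega
        rw [Finset.convexHull_eq] at hxt
        obtain ⟨w, hw0, hw1, hwx⟩ := hxt
        set eqv := t.equivFin with heqv
        set k := t.card with hk
        set p : Fin (n + 1) → E := fun i =>
          if h : (i : ℕ) < k then (eqv.symm ⟨i, h⟩ : E) else z₀ with hp
        set w' : Fin (n + 1) → ℝ := fun i =>
          if h : (i : ℕ) < k then w (eqv.symm ⟨i, h⟩ : E) else 0 with hw'
        have hsum : ∀ {M : Type} [AddCommMonoid M] (φ : E → M),
            (∑ i : Fin (n+1), if h : (i : ℕ) < k then φ (eqv.symm ⟨i, h⟩ : E) else 0)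
              = ∑ y ∈ t, φ y := by
          intro M _ φ
          rw [aux_pad_sum hcard _ (fun i hik => by simp [hik])]
          have h1 : ∑ y ∈ t, φ y = ∑ j : Fin k, φ (eqv.symm j : E) := by
            rw [← Finset.sum_attach t φ, ← Finset.univ_eq_attach]
            exact (Equiv.sum_comp eqv.symm (fun a : t => φ (a : E))).symm
          rw [h1]
          apply Finset.sum_congr rfl
          intro j _
          have hj : ((Fin.castLE hcard j : Fin (n + 1)) : ℕ) < k := j.isLt
          simp only [hj, dif_pos]
          exact congrArg (fun z : Fin k => φ (eqv.symm z : E)) (by ext; simp)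
        refine ⟨⟨w', p⟩, ⟨⟨fun i => ?_, ?_⟩, fun i _ => ?_⟩, ?_⟩
        · by_cases h : (i : ℕ) < k
          · simp only [hw', h, dif_pos]
            exact hw0 _ (Finset.coe_mem _)
          · simp [hw', h]
        · have h2 : ∑ i : Fin (n+1), w' i = ∑ y ∈ t, w y := hsum w
          rw [h2, hw1]
        · by_cases h : (i : ℕ) < k
          · simp only [hp, h, dif_pos]
            exact hts (Finset.coe_mem _)
          · simpa [hp, h] using hz₀
        · have h3 : ∑ i : Fin (n+1), w' i • p i = ∑ y ∈ t, w y • y := by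
            have h4 : ∀ i : Fin (n+1), w' i • p i =
                if h : (i : ℕ) < k then w (eqv.symm ⟨i, h⟩ : E) • (eqv.symm ⟨i, h⟩ : E) else 0 := by
              intro i
              by_cases h : (i : ℕ) < k <;> simp [hw', hp, h]
            calc ∑ i : Fin (n+1), w' i • p i
                = ∑ i : Fin (n+1), if h : (i : ℕ) < k then
                    w (eqv.symm ⟨i, h⟩ : E) • (eqv.symm ⟨i, h⟩ : E) else 0 :=
                  Finset.sum_congr rfl fun i _ => h4 i
              _ = ∑ y ∈ t, w y • y := hsum (fun y => w y • y)
          show ∑ i : Fin (n+1), w' i • p i = x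
          rw [h3, ← hwx, Finset.centerMass_eq_of_sum_1 _ _ hw1]
          simp [id]
      · rintro _ ⟨⟨wt, pt⟩, ⟨hwt, hpt⟩, rfl⟩
        apply (convex_convexHull ℝ S).sum_mem
        · intro i _; exact hwt.1 i
        · exact hwt.2
        · intro i _
          exact subset_convexHull ℝ S (hpt i (Set.mem_univ i))
    rw [himg]
    exact hT.image hgc

/-- A farthest point of a set from an outside point is an exposed point. -/
lemma aux_farthest_exposed {C : Set (EuclideanSpace ℝ (Fin n))} {q z : EuclideanSpace ℝ (Fin n)}
    (hz : z ∈ C) (hmax : ∀ w ∈ C, ‖w - q‖ ≤ ‖z - q‖) (hne : z ≠ q) :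
    z ∈ C.exposedPoints ℝ := by
  refine ⟨hz, innerSL ℝ (z - q), fun y hy => ?_⟩
  have hCS : ⟪z - q, y - q⟫ ≤ ‖z - q‖ * ‖z - q‖ := by
    refine le_trans (real_inner_le_norm _ _) ?_
    have := hmax y hy
    nlinarith [norm_nonneg (z - q), norm_nonneg (y - q)]
  have hsub : ⟪z - q, y - q⟫ = ⟪z - q, y⟫ - ⟪z - q, q⟫ := inner_sub_right _ _ _
  have hself : ⟪z - q, z - q⟫ = ‖z - q‖ * ‖z - q‖ := real_inner_self_eq_norm_mul_norm _
  have hsub2 : ⟪z - q, z - q⟫ = ⟪z - q, z⟫ - ⟪z - q, q⟫ := inner_sub_right _ _ _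
  constructor
  · simp only [innerSL_apply_apply]
    linarith
  · intro hle
    simp only [innerSL_apply_apply] at hle
    have h1 : ⟪z - q, y - q⟫ ≥ ‖z - q‖ * ‖z - q‖ := by linarith
    have h2 : ‖(y - q) - (z - q)‖ ^ 2 = ‖y - q‖ ^ 2 - 2 * ⟪y - q, z - q⟫ + ‖z - q‖ ^ 2 :=
      norm_sub_sq_real _ _
    have h3 : ⟪y - q, z - q⟫ = ⟪z - q, y - q⟫ := real_inner_comm _ _
    have h4 : ‖y - q‖ ≤ ‖z - q‖ := hmax y hy
    have h5 : ‖(y - q) - (z - q)‖ ^ 2 ≤ 0 := by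
      rw [h2, h3]
      nlinarith [norm_nonneg (y - q), norm_nonneg (z - q)]
    have h6 : (y - q) - (z - q) = 0 := by
      have := sq_nonneg (‖(y - q) - (z - q)‖)
      have : ‖(y - q) - (z - q)‖ ^ 2 = 0 := le_antisymm h5 this
      have := pow_eq_zero_iff (n := 2) (by norm_num) |>.mp this
      exact norm_eq_zero.mp this
    have : y - z = 0 := by
      have h7 : (y - q) - (z - q) = y - z := by abel
      rwa [h7] at h6
    exact sub_eq_zero.mp this

/-- Pointwise Straszewicz: every extreme point of a compact convex set is a limit of
exposed points. -/
lemma aux_straszewicz {C : Set (EuclideanSpace ℝ (Fin n))} (hC : IsCompact C)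
    (hconv : Convex ℝ C) {e : EuclideanSpace ℝ (Fin n)} (he : e ∈ C.extremePoints ℝ)
    {ε : ℝ} (hε : 0 < ε) : ∃ z ∈ C.exposedPoints ℝ, ‖z - e‖ < ε := by
  have heC : e ∈ C := he.1
  obtain ⟨M, hM⟩ : ∃ M : ℝ, ∀ w ∈ C, ‖w - e‖ ≤ M := by
    obtain ⟨r, hr⟩ := hC.isBounded.subset_closedBall e
    exact ⟨r, fun w hw => by simpa [dist_eq_norm] using hr hw⟩
  have hM0 : 0 ≤ M := le_trans (norm_nonneg _) (hM e heC)
  set S := C \ Metric.ball e ε with hSdef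
  have hScl : IsClosed S := hC.isClosed.sdiff Metric.isOpen_ball
  have hScomp : IsCompact S := hC.of_isClosed_subset hScl Set.diff_subset
  rcases S.eq_empty_or_nonempty with hSemp | hSne
  · -- C is contained in the ball around e
    have hCb : C ⊆ Metric.ball e ε := by
      intro w hw
      by_contra hwb
      exact (Set.eq_empty_iff_forall_notMem.mp hSemp w) ⟨hw, hwb⟩
    rcases subsingleton_or_nontrivial E with hsub | hnt
    · refine ⟨e, ⟨heC, 0, fun y hy => ⟨le_rfl, fun _ => Subsingleton.elim y e⟩⟩, by simpa using hε⟩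
    · obtain ⟨u, hu⟩ := exists_norm_eq E (le_of_lt (lt_of_le_of_lt hM0 (lt_add_one M)))
      set q := e + u with hq
      have hqC : q ∉ C := by
        intro hqC
        have := hM q hqC
        rw [hq] at this
        simp only [add_sub_cancel_left] at this
        rw [hu] at this
        linarith
      obtain ⟨z, hzC, hzmax⟩ := hC.exists_isMaxOn (f := fun w => ‖w - q‖) ⟨e, heC⟩
        (Continuous.continuousOn (by fun_prop))
      have hzmax' : ∀ w ∈ C, ‖w - q‖ ≤ ‖z - q‖ := fun w hw => hzmax hw
      have hzq : z ≠ q := fun h => hqC (h ▸ hzC)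
      refine ⟨z, aux_farthest_exposed hzC hzmax' hzq, ?_⟩
      have := hCb hzC
      simpa [dist_eq_norm] using this
  · -- separate e from the closed convex hull of S
    set D := convexHull ℝ S with hD
    have hDcomp : IsCompact D := aux_isCompact_convexHull hScomp
    have hDC : D ⊆ C := convexHull_min Set.diff_subset hconv
    have heD : e ∉ D := by
      intro heD
      have h1 : e ∈ D.extremePoints ℝ :=
        inter_extremePoints_subset_extremePoints_of_subset hDC ⟨heD, he⟩
      have h2 : e ∈ S := extremePoints_convexHull_subset h1
      exact h2.2 (Metric.mem_ball_self hε)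
    obtain ⟨l, u, hlu, hue⟩ :=
      geometric_hahn_banach_closed_point (convex_convexHull ℝ S) hDcomp.isClosed heD
    set v := (InnerProductSpace.toDual ℝ E).symm l with hv
    have hvl : ∀ w : E, ⟪v, w⟫ = l w := fun w => InnerProductSpace.toDual_symm_apply
    have hvne : v ≠ 0 := by
      intro hv0
      obtain ⟨s₀, hs₀⟩ := hSne
      have h1 : l s₀ < u := hlu s₀ (subset_convexHull ℝ S hs₀)
      have h2 : u < l e := hue
      have h3 : ∀ w : E, l w = 0 := by
        intro w
        rw [← hvl, hv0, inner_zero_left]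
      rw [h3 s₀] at h1
      rw [h3 e] at h2
      linarith
    have hvnorm : 0 < ‖v‖ := norm_pos_iff.mpr hvne
    set δ := l e - u with hδ
    have hδ0 : 0 < δ := by simp [hδ]; linarith [hue]
    set R := (M ^ 2 + 1) / (2 * δ) with hR
    have hR0 : 0 < R := by positivity
    set q := e - R • v with hq
    have hkey : ∀ w ∈ S, ‖w - q‖ < ‖e - q‖ := by
      intro w hw
      have hwD : w ∈ D := subset_convexHull ℝ S hw
      have hlw : l w < u := hlu w hwD
      have hinner : ⟪w - e, v⟫ < -δ := by
        have : ⟪v, w - e⟫ = l w - l e := by rw [inner_sub_right, hvl, hvl]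
        rw [real_inner_comm, this]
        simp [hδ]; linarith
      have hexp : ‖w - q‖ ^ 2 = ‖w - e‖ ^ 2 + 2 * R * ⟪w - e, v⟫ + R ^ 2 * ‖v‖ ^ 2 := by
        have h1 : w - q = (w - e) + R • v := by rw [hq]; abel
        rw [h1, norm_add_sq_real]
        rw [real_inner_smul_right, norm_smul]
        simp [abs_of_pos hR0]
        ring
      have heq : ‖e - q‖ ^ 2 = R ^ 2 * ‖v‖ ^ 2 := by
        have h1 : e - q = R • v := by rw [hq]; abel
        rw [h1, norm_smul]
        simp [abs_of_pos hR0]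
        ring
      have hwe : ‖w - e‖ ≤ M := hM w hw.1
      have hRδ : 2 * R * δ = M ^ 2 + 1 := by
        rw [hR]; field_simp
      have hlt : ‖w - q‖ ^ 2 < ‖e - q‖ ^ 2 := by
        rw [hexp, heq]
        nlinarith [norm_nonneg (w - e), sq_nonneg (‖w - e‖)]
      exact lt_of_pow_lt_pow_left₀ 2 (norm_nonneg _) hlt
    obtain ⟨z, hzC, hzmax⟩ := hC.exists_isMaxOn (f := fun w => ‖w - q‖) ⟨e, heC⟩
      (Continuous.continuousOn (by fun_prop))
    have hzmax' : ∀ w ∈ C, ‖w - q‖ ≤ ‖z - q‖ := fun w hw => hzmax hw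
    have hzS : z ∉ S := by
      intro hzS
      have h1 := hkey z hzS
      have h2 := hzmax' e heC
      linarith
    have hzball : z ∈ Metric.ball e ε := by
      by_contra h
      exact hzS ⟨hzC, h⟩
    have hzq : z ≠ q := by
      intro h
      have h1 : ‖e - q‖ ≤ ‖z - q‖ := hzmax' e heC
      rw [h] at h1
      simp only [sub_self, norm_zero] at h1
      have h2 : ‖e - q‖ = R * ‖v‖ := by
        have : e - q = R • v := by rw [hq]; abel
        rw [this, norm_smul, Real.norm_eq_abs, abs_of_pos hR0]
      nlinarith
    refine ⟨z, aux_farthest_exposed hzC hzmax' hzq, ?_⟩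
    simpa [dist_eq_norm] using hzball

lemma aux_polar_convex (K : Set (EuclideanSpace ℝ (Fin n))) : Convex ℝ (polar K) := by
  intro y₁ h₁ y₂ h₂ a b ha hb hab
  intro x hx
  have e1 := h₁ x hx
  have e2 := h₂ x hx
  rw [inner_add_right, real_inner_smul_right, real_inner_smul_right]
  nlinarith

lemma aux_polar_isClosed (K : Set (EuclideanSpace ℝ (Fin n))) : IsClosed (polar K) := by
  have : polar K = ⋂ x ∈ K, {y : E | ⟪x, y⟫ ≤ 1} := by
    ext y; simp [polar, Set.mem_iInter]
  rw [this]
  exact isClosed_biInter fun x _ =>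
    isClosed_le (Continuous.inner continuous_const continuous_id) continuous_const

lemma aux_polar_isCompact {K : Set (EuclideanSpace ℝ (Fin n))}
    (h0 : (0 : EuclideanSpace ℝ (Fin n)) ∈ interior K) : IsCompact (polar K) := by
  obtain ⟨ε, hε, hball⟩ := Metric.mem_nhds_iff.mp (mem_interior_iff_mem_nhds.mp h0)
  apply Metric.isCompact_of_isClosed_isBounded (aux_polar_isClosed K)
  rw [isBounded_iff_forall_norm_le]
  refine ⟨2 / ε, fun y hy => ?_⟩
  rcases eq_or_ne y 0 with rfl | hy0
  · simp; positivity
  · have hyn : 0 < ‖y‖ := norm_pos_iff.mpr hy0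
    set x : E := (ε / 2) • (‖y‖⁻¹ • y) with hx
    have hxK : x ∈ K := by
      apply hball
      rw [Metric.mem_ball, dist_zero_right, hx, norm_smul, norm_smul]
      simp [abs_of_pos hε, abs_of_pos (inv_pos.mpr hyn)]
      rw [inv_mul_cancel₀ (ne_of_gt hyn)]
      linarith
    have := hy x hxK
    rw [hx, real_inner_smul_left, real_inner_smul_left, real_inner_self_eq_norm_mul_norm] at this
    have h2 : ε / 2 * (‖y‖⁻¹ * (‖y‖ * ‖y‖)) = ε / 2 * ‖y‖ := by
      field_simp
    rw [h2] at this
    rw [le_div_iff₀ hε]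
    nlinarith

lemma aux_zero_mem_polar (K : Set (EuclideanSpace ℝ (Fin n))) : (0 : E) ∈ polar K :=
  fun x _ => by simp

/-- Every nonzero exposed point of the polar attains the value 1 on `K`. -/
lemma aux_exposed_mem_hatK {K : Set (EuclideanSpace ℝ (Fin n))}
    (hKcl : IsClosed K) (hKconv : Convex ℝ K) (h0K : (0 : E) ∈ K)
    {z : E} (hz : z ∈ (polar K).exposedPoints ℝ) (hz0 : z ≠ 0) : z ∈ hatK K := by
  obtain ⟨hzP, l, hl⟩ := hz
  have h0P : (0 : E) ∈ polar K := aux_zero_mem_polar K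
  have hc : 0 < l z := by
    rcases lt_or_ge 0 (l z) with h | h
    · exact h
    · exfalso
      apply hz0
      have := (hl 0 h0P).2 (by simpa using h)
      exact this.symm
  set v := (InnerProductSpace.toDual ℝ E).symm l with hv
  have hvl : ∀ w : E, ⟪v, w⟫ = l w := fun w => InnerProductSpace.toDual_symm_apply
  set x₁ : E := (l z)⁻¹ • v with hx₁
  have hx₁K : x₁ ∈ K := by
    by_contra hx₁K
    obtain ⟨g, s, hgs, hsx⟩ := geometric_hahn_banach_closed_point hKconv hKcl hx₁K
    have hs0 : 0 < s := by
      have := hgs 0 h0K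
      simpa using this
    set u := (InnerProductSpace.toDual ℝ E).symm g with hu
    have hul : ∀ w : E, ⟪u, w⟫ = g w := fun w => InnerProductSpace.toDual_symm_apply
    set y' : E := s⁻¹ • u with hy'
    have hy'P : y' ∈ polar K := by
      intro a ha
      have h1 : g a < s := hgs a ha
      rw [hy', real_inner_smul_right]
      have h2 : ⟪a, u⟫ = g a := by rw [real_inner_comm]; exact hul a
      rw [h2]
      rw [inv_mul_le_iff₀ hs0]  -- s⁻¹ * g a ≤ 1 ↔ g a ≤ s * 1? check direction
      linarith
    have h3 : l y' ≤ l z := (hl y' hy'P).1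
    have h4 : l y' = s⁻¹ * ⟪v, u⟫ := by
      rw [← hvl, hy', real_inner_smul_right]
    have h5 : g x₁ = (l z)⁻¹ * ⟪u, v⟫ := by
      rw [← hul, hx₁, real_inner_smul_right]
    have h6 : ⟪u, v⟫ = ⟪v, u⟫ := real_inner_comm _ _
    rw [h5, h6] at hsx
    rw [h4] at h3
    have h7 : s * l z < ⟪v, u⟫ := by
      have h9 : (l z)⁻¹ * ⟪v, u⟫ * l z = ⟪v, u⟫ := by field_simp
      nlinarith [mul_lt_mul_of_pos_right hsx hc]
    have h8 : ⟪v, u⟫ ≤ s * l z := by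
      have h9 : s⁻¹ * ⟪v, u⟫ * s = ⟪v, u⟫ := by field_simp
      nlinarith [mul_le_mul_of_nonneg_right h3 hs0.le]
    linarith
  refine ⟨hzP, x₁, hx₁K, ?_⟩
  rw [hx₁, real_inner_smul_left, hvl, inv_mul_cancel₀ (ne_of_gt hc)]

/-- From a point of `hatK K`, produce a nonzero extreme point of the polar with a larger
inner product against `x`. -/
lemma aux_exists_extreme {K : Set (EuclideanSpace ℝ (Fin n))}
    (h0 : (0 : EuclideanSpace ℝ (Fin n)) ∈ interior K)
    {y : E} (hy : y ∈ hatK K) (x : E) :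
    ∃ e ∈ (polar K).extremePoints ℝ, e ≠ 0 ∧ ⟪x, y⟫ ≤ ⟪x, e⟫ := by
  obtain ⟨hyP, x₀, hx₀K, hx₀y⟩ := hy
  have hPcomp : IsCompact (polar K) := aux_polar_isCompact h0
  set l₀ : E →L[ℝ] ℝ := innerSL ℝ x₀ with hl₀
  set F := l₀.toExposed (polar K) with hF
  have hFexp : IsExposed ℝ (polar K) F := ContinuousLinearMap.toExposed.isExposed
  have hyF : y ∈ F := by
    refine ⟨hyP, fun w hw => ?_⟩
    simp only [hl₀, innerSL_apply_apply]
    rw [hx₀y]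
    exact hw x₀ hx₀K
  have hFone : ∀ z ∈ F, ⟪x₀, z⟫ = 1 := by
    intro z hz
    refine le_antisymm (hz.1 x₀ hx₀K) ?_
    have := hz.2 y hyP
    simp only [hl₀, innerSL_apply_apply] at this
    rw [hx₀y] at this
    exact this
  have hFcomp : IsCompact F := hFexp.isCompact hPcomp
  set l₁ : E →L[ℝ] ℝ := innerSL ℝ x with hl₁
  set F' := l₁.toExposed F with hF'
  have hF'exp : IsExposed ℝ F F' := ContinuousLinearMap.toExposed.isExposed
  have hF'ne : F'.Nonempty := by
    obtain ⟨z₁, hz₁F, hz₁max⟩ := hFcomp.exists_isMaxOn ⟨y, hyF⟩ (l₁.continuous.continuousOn)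
    exact ⟨z₁, hz₁F, fun w hw => hz₁max hw⟩
  have hF'comp : IsCompact F' := hF'exp.isCompact hFcomp
  have hF'ext : IsExtreme ℝ (polar K) F' := hFexp.isExtreme.trans hF'exp.isExtreme
  obtain ⟨e, he⟩ := hF'comp.extremePoints_nonempty hF'ne
  have heP : e ∈ (polar K).extremePoints ℝ := hF'ext.extremePoints_subset_extremePoints he
  have heF' : e ∈ F' := he.1
  have heF : e ∈ F := heF'.1
  have he0 : e ≠ 0 := by
    intro h
    have := hFone e heF
    rw [h] at this
    simp at this
  refine ⟨e, heP, he0, ?_⟩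
  have := heF'.2 y hyF
  simpa only [hl₁, innerSL_apply_apply] using this

end Aux

theorem stmt5 (K : Set (EuclideanSpace ℝ (Fin n)))
    (hKcl : IsClosed K) (hKconv : Convex ℝ K) (h0 : (0 : EuclideanSpace ℝ (Fin n)) ∈ interior K) :
    ∀ x, suppFn (hatK K) x = suppFn (hatK K ∩ Set.exposedPoints ℝ (polar K)) x := by
  intro x
  classical
  have h0K : (0 : EuclideanSpace ℝ (Fin n)) ∈ K := interior_subset h0
  rcases (hatK K).eq_empty_or_nonempty with hemp | ⟨y₀, hy₀⟩
  · rw [hemp, Set.empty_inter]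
  · have hPcomp : IsCompact (polar K) := aux_polar_isCompact h0
    have hPconv : Convex ℝ (polar K) := aux_polar_convex K
    have hcont : Continuous fun y : EuclideanSpace ℝ (Fin n) => ⟪x, y⟫ :=
      Continuous.inner continuous_const continuous_id
    have hbddP : BddAbove ((fun y => ⟪x, y⟫) '' polar K) :=
      (hPcomp.image hcont).bddAbove
    have hsub1 : hatK K ⊆ polar K := fun y hy => hy.1
    have hbdd1 : BddAbove ((fun y => ⟪x, y⟫) '' hatK K) :=
      hbddP.mono (Set.image_mono hsub1)
    have hbdd2 : BddAbove ((fun y => ⟪x, y⟫) '' (hatK K ∩ Set.exposedPoints ℝ (polar K))) :=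
      hbddP.mono (Set.image_mono (fun y hy => hsub1 hy.1))
    -- a nonzero exposed point exists near any nonzero extreme point; in particular the
    -- intersection is nonempty and dominates all values on hatK K
    have hkey : ∀ y ∈ hatK K, ⟪x, y⟫ ≤
        sSup ((fun y => ⟪x, y⟫) '' (hatK K ∩ Set.exposedPoints ℝ (polar K))) := by
      intro y hy
      obtain ⟨e, heP, he0, hle⟩ := aux_exists_extreme h0 hy x
      have hen : 0 < ‖e‖ := norm_pos_iff.mpr he0
      have hmain : ∀ ε : ℝ, 0 < ε → ⟪x, e⟫ ≤
          sSup ((fun y => ⟪x, y⟫) '' (hatK K ∩ Set.exposedPoints ℝ (polar K))) + ε := by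
        intro ε hε
        set δ := min (‖e‖ / 2) (ε / (‖x‖ + 1)) with hδ
        have hδ0 : 0 < δ := lt_min (by positivity) (by positivity)
        obtain ⟨z, hzexp, hznear⟩ := aux_straszewicz hPcomp hPconv heP hδ0
        have hz0 : z ≠ 0 := by
          intro h
          rw [h] at hznear
          simp only [zero_sub, norm_neg] at hznear
          have : δ ≤ ‖e‖ / 2 := min_le_left _ _
          linarith
        have hzhat : z ∈ hatK K := aux_exposed_mem_hatK hKcl hKconv h0K hzexp hz0
        have hzmem : z ∈ hatK K ∩ Set.exposedPoints ℝ (polar K) := ⟨hzhat, hzexp⟩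
        have h1 : ⟪x, z⟫ ≤
            sSup ((fun y => ⟪x, y⟫) '' (hatK K ∩ Set.exposedPoints ℝ (polar K))) :=
          le_csSup hbdd2 (Set.mem_image_of_mem _ hzmem)
        have h2 : ⟪x, e⟫ - ⟪x, z⟫ ≤ ‖x‖ * δ := by
          have h3 : ⟪x, e⟫ - ⟪x, z⟫ = ⟪x, e - z⟫ := (inner_sub_right _ _ _).symm
          rw [h3]
          calc ⟪x, e - z⟫ ≤ ‖x‖ * ‖e - z‖ := real_inner_le_norm _ _
            _ ≤ ‖x‖ * δ := by
                apply mul_le_mul_of_nonneg_left _ (norm_nonneg x)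
                rw [← norm_neg (e - z)]
                simpa [neg_sub] using hznear.le
        have h4 : ‖x‖ * δ ≤ ε := by
          have h5 : δ ≤ ε / (‖x‖ + 1) := min_le_right _ _
          have h6 : ‖x‖ * δ ≤ ‖x‖ * (ε / (‖x‖ + 1)) :=
            mul_le_mul_of_nonneg_left h5 (norm_nonneg x)
          have h7 : ‖x‖ * (ε / (‖x‖ + 1)) ≤ ε := by
            rw [div_eq_mul_inv, ← mul_assoc]
            rw [mul_comm (‖x‖) ε, mul_assoc]
            nth_rewrite 2 [← mul_one ε]
            apply mul_le_mul_of_nonneg_left _ hε.le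
            rw [mul_inv_le_iff₀ (by positivity)]
            simp
          linarith
        linarith
      have := le_of_forall_pos_le_add hmain
      linarith
    apply le_antisymm
    · apply csSup_le (Set.Nonempty.image _ ⟨y₀, hy₀⟩)
      rintro _ ⟨y, hy, rfl⟩
      exact hkey y hy
    · apply csSup_le_csSup hbdd1
      · -- nonemptiness of the image of the intersection
        obtain ⟨e, heP, he0, _⟩ := aux_exists_extreme h0 hy₀ x
        obtain ⟨z, hzexp, hznear⟩ := aux_straszewicz hPcomp hPconv heP
          (half_pos (norm_pos_iff.mpr he0))
        have hz0 : z ≠ 0 := by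
          intro h
          rw [h] at hznear
          simp only [zero_sub, norm_neg] at hznear
          have hen : 0 < ‖e‖ := norm_pos_iff.mpr he0
          linarith
        exact Set.Nonempty.image _
          ⟨z, aux_exposed_mem_hatK hKcl hKconv h0K hzexp hz0, hzexp⟩
      · exact Set.image_mono Set.inter_subset_left
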